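/- Conversely, let U be a k-dimensional GF(q)-subspace of GF(q^v) such that for every g ∈ GF(q^v)^× with g·U ≠ U one has dim(U ∩ g·U) ≤ 1. If u₁,u₂,u₃,u₄ are nonzero elements of U with u₁/u₂ = u₃/u₄ and ⟨u₁⟩ ≠ ⟨u₂⟩, then either ⟨u₁⟩ = ⟨u₃⟩ and ⟨u₂⟩ = ⟨u₄⟩, or u₁/u₂ · U = U. -/

import Mathlib

open Module

/-- Converse: if `U` intersects every translate `g·U ≠ U` in dimension at most `1`,
then an equality of quotients `u₁/u₂ = u₃/u₄` with `⟨u₁⟩ ≠ ⟨u₂⟩` forces either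
`⟨u₁⟩ = ⟨u₃⟩` and `⟨u₂⟩ = ⟨u₄⟩`, or `(u₁/u₂)·U = U`. -/
theorem good_orbit_imp_distinct_quotients
    (q v k : ℕ) (hv : 1 ≤ v) (hk : 2 ≤ k)
    (K F : Type*) [Field K] [Fintype K] [Field F] [Fintype F] [Algebra K F]
    (hq : Fintype.card K = q) (hdim : finrank K F = v)
    (U : Submodule K F) (hU : finrank K ↥U = k)
    (hgood : ∀ g : Fˣ, Submodule.map (LinearMap.mulLeft K (g : F)) U ≠ U →
      finrank K ↥(U ⊓ Submodule.map (LinearMap.mulLeft K (g : F)) U) ≤ 1)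
    (u₁ u₂ u₃ u₄ : F)
    (h₁ : u₁ ∈ U) (h₂ : u₂ ∈ U) (h₃ : u₃ ∈ U) (h₄ : u₄ ∈ U)
    (hn₁ : u₁ ≠ 0) (hn₂ : u₂ ≠ 0) (hn₃ : u₃ ≠ 0) (hn₄ : u₄ ≠ 0)
    (heq : u₁ / u₂ = u₃ / u₄)
    (hne : Submodule.span K {u₁} ≠ Submodule.span K {u₂}) :
    (Submodule.span K {u₁} = Submodule.span K {u₃} ∧
      Submodule.span K {u₂} = Submodule.span K {u₄}) ∨
    Submodule.map (LinearMap.mulLeft K (u₁ / u₂)) U = U := by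
  have : Finite F := inferInstance
  have hFD : FiniteDimensional K F := Module.Finite.of_finite
  by_cases hmap : Submodule.map (LinearMap.mulLeft K (u₁ / u₂)) U = U
  · exact Or.inr hmap
  left
  set g : F := u₁ / u₂ with hg
  have hgne : g ≠ 0 := div_ne_zero hn₁ hn₂
  set W := U ⊓ Submodule.map (LinearMap.mulLeft K g) U with hW
  have hWle : finrank K ↥W ≤ 1 := by
    have := hgood (Units.mk0 g hgne) (by simpa using hmap)
    exact this
  -- u₁ ∈ W
  have hu1W : u₁ ∈ W := by
    refine ⟨h₁, ⟨u₂, h₂, ?_⟩⟩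
    simp [LinearMap.mulLeft, hg, div_mul_cancel₀ _ hn₂]
  -- u₃ ∈ W
  have hu3W : u₃ ∈ W := by
    refine ⟨h₃, ⟨u₄, h₄, ?_⟩⟩
    simp only [LinearMap.mulLeft_apply]
    rw [heq]
    exact div_mul_cancel₀ _ hn₄
  -- spans inside W coincide
  have hspan1 : Submodule.span K {u₁} = W := by
    apply Submodule.eq_of_le_of_finrank_le
    · simpa [Submodule.span_le] using hu1W
    · calc finrank K ↥W ≤ 1 := hWle
        _ ≤ finrank K ↥(Submodule.span K {u₁}) := by
            rw [finrank_span_singleton hn₁]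
  have hspan3 : Submodule.span K {u₃} = W := by
    apply Submodule.eq_of_le_of_finrank_le
    · simpa [Submodule.span_le] using hu3W
    · calc finrank K ↥W ≤ 1 := hWle
        _ ≤ finrank K ↥(Submodule.span K {u₃}) := by
            rw [finrank_span_singleton hn₃]
  have h13 : Submodule.span K {u₁} = Submodule.span K {u₃} := hspan1.trans hspan3.symm
  refine ⟨h13, ?_⟩
  -- extract scalar: u₃ = c • u₁
  have hmem : u₃ ∈ Submodule.span K {u₁} := by
    rw [h13]; exact Submodule.mem_span_singleton_self u₃
  obtain ⟨c, hc⟩ := Submodule.mem_span_singleton.mp hmem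
  have hcne : c ≠ 0 := by
    rintro rfl; simp at hc; exact hn₃ hc.symm
  -- u₄ = c • u₂
  have hmul : u₁ * u₄ = u₃ * u₂ := (div_eq_div_iff hn₂ hn₄).mp heq
  have hu4 : u₄ = c • u₂ := by
    have : u₁ * u₄ = u₁ * (c • u₂) := by
      rw [hmul, ← hc]
      rw [Algebra.smul_def, Algebra.smul_def]; ring
    exact mul_left_cancel₀ hn₁ this
  rw [hu4]
  exact (Submodule.span_singleton_smul_eq (IsUnit.mk0 c hcne) u₂).symm
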